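/- Let k be an algebraically closed field, let n ≥ 1, and let I be a radical homogeneous ideal of A := k[x₀, …, xₙ] such that the Krull dimension of A/I is at least 2 (equivalently, the projective variety Y := V₊(I) ⊆ ℙⁿ(k) has dimension at least 1). Let h ∈ GL_{n+1}(k) satisfy rank(h − 1) ≤ 1, where h − 1 is the matrix h minus the identity matrix. Then Y ∩ hY ≠ ∅: there exists v ∈ k^{n+1}, v ≠ 0, such that f(v) = 0 and f(h⁻¹·v) = 0 for every f ∈ I. -/

import Mathlib

set_option maxHeartbeats 1000000

open MvPolynomial in
lemma aux_homogComp_mul_linear {σ k : Type*} [CommRing k]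
    {ℓ : MvPolynomial σ k} (hℓ : ℓ.IsHomogeneous 1) (a : MvPolynomial σ k) {N : ℕ} (hN : 1 ≤ N) :
    homogeneousComponent N (a * ℓ) = homogeneousComponent (N - 1) a * ℓ := by
  conv_lhs => rw [← sum_homogeneousComponent a]
  rw [Finset.sum_mul, map_sum]
  have key : ∀ j, homogeneousComponent N (homogeneousComponent j a * ℓ)
      = if j = N - 1 then homogeneousComponent j a * ℓ else 0 := by
    intro j
    have hj : (homogeneousComponent j a * ℓ).IsHomogeneous (j + 1) :=
      (homogeneousComponent_isHomogeneous j a).mul hℓ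
    rw [homogeneousComponent_of_mem ((mem_homogeneousSubmodule _ _).mpr hj)]
    by_cases hc : j = N - 1
    · subst hc; rw [if_pos (by omega), if_pos rfl]
    · rw [if_neg (by omega), if_neg hc]
  simp_rw [key]
  rw [Finset.sum_ite_eq' (Finset.range (a.totalDegree + 1)) (N-1)
      (fun j => homogeneousComponent j a * ℓ)]
  split_ifs with hmem
  · rfl
  · rw [Finset.mem_range, not_lt] at hmem
    rw [homogeneousComponent_eq_zero _ a (by omega), zero_mul]

open MvPolynomial in
lemma aux_exists_zero_on_hyperplane {k : Type*} [Field k] [IsAlgClosed k] (n : ℕ)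
    (I : Ideal (MvPolynomial (Fin (n + 1)) k))
    (hhom : ∀ f ∈ I, ∀ m : ℕ, homogeneousComponent m f ∈ I)
    (hdim : 2 ≤ ringKrullDim (MvPolynomial (Fin (n + 1)) k ⧸ I))
    (w : Fin (n + 1) → k) :
    ∃ v : Fin (n + 1) → k, v ≠ 0 ∧ (∀ f ∈ I, eval v f = 0) ∧ ∑ j, w j * v j = 0 := by
  by_contra hcon
  push_neg at hcon
  set A := MvPolynomial (Fin (n + 1)) k
  set ℓ : A := ∑ j, C (w j) * X j with hℓdef
  have hℓhom : ℓ.IsHomogeneous 1 := by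
    apply IsHomogeneous.sum
    intro j _
    simpa using (isHomogeneous_C _ (w j)).mul (isHomogeneous_X _ j)
  set J : Ideal A := I ⊔ Ideal.span {ℓ} with hJ
  -- every X i is in the radical of J
  have hXrad : ∀ i, X i ∈ J.radical := by
    intro i
    rw [← vanishingIdeal_zeroLocus_eq_radical (K := k), mem_vanishingIdeal_iff]
    intro x hx
    rw [mem_zeroLocus_iff] at hx
    have hx0 : x = 0 := by
      by_contra hxne
      refine hcon x hxne (fun f hf => hx f (Ideal.mem_sup_left hf)) ?_
      have := hx ℓ (Ideal.mem_sup_right (Ideal.subset_span rfl))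
      rw [hℓdef] at this
      simpa using this
    subst hx0; simp
  -- common exponent
  have hXN : ∀ i, ∃ N, X i ^ N ∈ J := fun i => hXrad i
  choose Nf hNf using hXN
  set N : ℕ := 1 + Finset.univ.sup Nf with hNdef
  have hN1 : 1 ≤ N := by omega
  have hpow : ∀ i, X (R := k) i ^ N ∈ J := by
    intro i
    have hle : Nf i ≤ N := le_trans (Finset.le_sup (Finset.mem_univ i)) (by omega)
    rw [show N = (N - Nf i) + Nf i by omega, pow_add]
    exact Ideal.mul_mem_left _ _ (hNf i)
  -- homogeneous representation
  have hrep : ∀ i, ∃ G : A, G.IsHomogeneous (N-1) ∧ X i ^ N - G * ℓ ∈ I := by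
    intro i
    obtain ⟨f, hf, g, hg, hfg⟩ := Submodule.mem_sup.mp (hpow i)
    obtain ⟨a, rfl⟩ := Ideal.mem_span_singleton'.mp hg
    refine ⟨homogeneousComponent (N-1) a, homogeneousComponent_isHomogeneous _ _, ?_⟩
    have h1 : homogeneousComponent N (X (R := k) i ^ N) = X i ^ N := by
      have hX : (X (R := k) i ^ N).IsHomogeneous N := by
        simpa using (isHomogeneous_X k i).pow N
      rw [homogeneousComponent_of_mem ((mem_homogeneousSubmodule _ _).mpr hX), if_pos rfl]
    have h2 := congrArg (homogeneousComponent N) hfg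
    rw [map_add, aux_homogComp_mul_linear hℓhom a hN1, h1] at h2
    have h3 : homogeneousComponent N f ∈ I := hhom f hf N
    have h4 : X (R := k) i ^ N - homogeneousComponent (N-1) a * ℓ
        = homogeneousComponent N f := by rw [← h2]; ring
    rw [h4]; exact h3
  choose G hGhom hGI using hrep
  -- the quotient ring as a module over k[X]
  set B := A ⧸ I
  set mk : A →+* B := Ideal.Quotient.mk I with hmk
  set t : B := mk ℓ with ht
  letI : Algebra (Polynomial k) B := ((Polynomial.aeval t).toRingHom : Polynomial k →+* B).toAlgebra
  have halg : algebraMap (Polynomial k) B = (Polynomial.aeval t).toRingHom := rfl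
  have hXsmul : ∀ b : B, (Polynomial.X : Polynomial k) • b = t * b := by
    intro b; rw [Algebra.smul_def, halg]; simp
  have hCsmul : ∀ (c : k) (b : B), (Polynomial.C c : Polynomial k) • b = mk (C c) * b := by
    intro c b
    rw [Algebra.smul_def, halg]
    simp only [AlgHom.toRingHom_eq_coe, RingHom.coe_coe, Polynomial.aeval_C]
    congr 1
  set D : ℕ := (n+1)*(N-1)+1 with hD
  set gens : Set B := Set.range (fun g : Fin (n+1) → Fin D =>
    mk (monomial (Finsupp.equivFunOnFinite.symm fun i => (g i : ℕ)) 1)) with hgens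
  set M : Submodule (Polynomial k) B := Submodule.span (Polynomial k) gens with hM
  have hmulC : ∀ (c : k) (b : B), b ∈ M → mk (C c) * b ∈ M := by
    intro c b hb; rw [← hCsmul]; exact M.smul_mem _ hb
  have hmult : ∀ b ∈ M, t * b ∈ M := by
    intro b hb; rw [← hXsmul]; exact M.smul_mem _ hb
  have claim : ∀ d (p : A), p.totalDegree ≤ d → mk p ∈ M := by
    intro d
    induction d using Nat.strong_induction_on with
    | _ d IH =>
      intro p hp
      nth_rewrite 1 [p.as_sum]
      rw [map_sum]
      apply Submodule.sum_mem
      intro m hm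
      have hs : (m.sum fun _ e => e) ≤ p.totalDegree := le_totalDegree hm
      have hsum : (m.sum fun _ e => e) = ∑ i, m i := Finsupp.sum_fintype _ _ (fun _ => rfl)
      rw [show (monomial m) (coeff m p) = C (coeff m p) * monomial m 1 by
        rw [C_mul_monomial, mul_one], map_mul]
      apply hmulC
      by_cases hcase : ∑ i, m i < D
      · -- small degree: a generator
        apply Submodule.subset_span
        have hmi : ∀ i, m i < D := by
          intro i
          refine lt_of_le_of_lt ?_ hcase
          exact Finset.single_le_sum (f := fun i => m i) (fun _ _ => Nat.zero_le _)
            (Finset.mem_univ i)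
        refine ⟨fun i => ⟨m i, hmi i⟩, ?_⟩
        show mk (monomial (Finsupp.equivFunOnFinite.symm fun i => (m i : ℕ)) 1) = _
        have h5 : (Finsupp.equivFunOnFinite.symm fun i => (m i : ℕ)) = m :=
          Finsupp.equivFunOnFinite_symm_coe m
        rw [h5]
      · -- large degree: use the relations
        push_neg at hcase
        have hex : ∃ i, N ≤ m i := by
          by_contra hno
          push_neg at hno
          have : ∑ i, m i ≤ ∑ _i : Fin (n+1), (N-1) :=
            Finset.sum_le_sum (fun i _ => by have := hno i; omega)
          rw [Finset.sum_const, Finset.card_univ, Fintype.card_fin, smul_eq_mul] at this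
          omega
        obtain ⟨i, hNi⟩ := hex
        set m' : Fin (n+1) →₀ ℕ := m - Finsupp.single i N with hm'
        have hsingle : Finsupp.single i N + m' = m := by
          ext j
          simp only [Finsupp.add_apply, hm', Finsupp.tsub_apply, Finsupp.single_apply]
          by_cases hj : i = j
          · subst hj; simp; omega
          · simp [hj]
        have hmono : (monomial m (1:k)) = X i ^ N * monomial m' 1 := by
          rw [X_pow_eq_monomial, monomial_mul, one_mul, hsingle]
        have hm'sum : N + ∑ j, m' j = ∑ j, m j := by
          conv_rhs => rw [← hsingle]
          simp only [Finsupp.add_apply, Finset.sum_add_distrib]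
          congr 1
          simp [Finsupp.single_apply]
        have hmkeq : mk (X i ^ N) = t * mk (G i) := by
          have := Ideal.Quotient.eq.mpr (hGI i)
          rw [hmk, this, ht, map_mul, mul_comm]
        rw [hmono, map_mul, hmkeq, mul_assoc, ← map_mul]
        apply hmult
        have htd : (G i * monomial m' (1:k)).totalDegree ≤ d - 1 := by
          refine le_trans (totalDegree_mul _ _) ?_
          have h1 : (G i).totalDegree ≤ N - 1 := (hGhom i).totalDegree_le
          have h2 : (monomial m' (1:k)).totalDegree = ∑ j, m' j := by
            rw [totalDegree_monomial _ one_ne_zero]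
            exact Finsupp.sum_fintype _ _ (fun _ => rfl)
          rw [h2]
          have : ∑ i, m i ≤ d := by rw [← hsum]; omega
          omega
        exact IH (d-1) (by omega) _ htd
  have hspan : M = ⊤ := by
    rw [eq_top_iff]
    rintro b -
    obtain ⟨p, rfl⟩ := Ideal.Quotient.mk_surjective b
    exact claim p.totalDegree p le_rfl
  haveI hfin : Module.Finite (Polynomial k) B :=
    ⟨⟨(Set.finite_range _).toFinset, by
      rw [Set.Finite.coe_toFinset]; exact hspan⟩⟩
  haveI hint : Algebra.IsIntegral (Polynomial k) B := Algebra.IsIntegral.of_finite _ _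
  haveI hnontriv : Nontrivial B := by
    rcases subsingleton_or_nontrivial B with hs | hnt
    · rw [ringKrullDim_eq_bot_of_subsingleton] at hdim
      exact absurd hdim (by simp)
    · exact hnt
  have hlen : ∀ (P : LTSeries (PrimeSpectrum B)), P.length ≤ 1 := by
    intro P
    by_contra hP
    push_neg at hP
    have h01 : P.toFun ⟨0, by omega⟩ < P.toFun ⟨1, by omega⟩ :=
      P.strictMono (by simp [Fin.lt_def])
    have h12 : P.toFun ⟨1, by omega⟩ < P.toFun ⟨2, by omega⟩ :=
      P.strictMono (by simp [Fin.lt_def])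
    set P0 := P.toFun ⟨0, by omega⟩
    set P1 := P.toFun ⟨1, by omega⟩
    set P2 := P.toFun ⟨2, by omega⟩
    have comap_lt : ∀ (Q Q' : PrimeSpectrum B), Q < Q' →
        Q.asIdeal.comap (algebraMap (Polynomial k) B)
          < Q'.asIdeal.comap (algebraMap (Polynomial k) B) := by
      intro Q Q' hQQ
      rw [← PrimeSpectrum.asIdeal_lt_asIdeal] at hQQ
      obtain ⟨hle, x, hx1, hx0⟩ := SetLike.lt_iff_le_and_exists.mp hQQ
      exact Ideal.comap_lt_comap_of_integral_mem_sdiff hle ⟨hx1, hx0⟩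
        (Algebra.IsIntegral.isIntegral x)
    have hc01 := comap_lt _ _ h01
    have hc12 := comap_lt _ _ h12
    haveI : (P1.asIdeal.comap (algebraMap (Polynomial k) B)).IsPrime :=
      Ideal.IsPrime.comap _
    haveI : (P2.asIdeal.comap (algebraMap (Polynomial k) B)).IsPrime :=
      Ideal.IsPrime.comap _
    have hne : (P1.asIdeal.comap (algebraMap (Polynomial k) B)) ≠ ⊥ := by
      intro hbot
      rw [hbot] at hc01
      exact not_lt_bot hc01
    have hmax := IsPrime.to_maximal_ideal hne
    exact (Ideal.IsPrime.ne_top ‹(P2.asIdeal.comap (algebraMap (Polynomial k) B)).IsPrime›)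
      (hmax.1.2 _ hc12)
  have hle1 : ringKrullDim B ≤ 1 := by
    rw [show ringKrullDim B = Order.krullDim (PrimeSpectrum B) from rfl,
      Order.krullDim_eq_iSup_length]
    have : (⨆ (P : LTSeries (PrimeSpectrum B)), (P.length : ℕ∞)) ≤ 1 :=
      iSup_le fun P => by exact_mod_cast hlen P
    have h2 := (WithBot.coe_le_coe (α := ℕ∞)).mpr this
    simpa using h2
  exact absurd (hdim.trans hle1) (by norm_num)


-- rank ≤ 1 matrix kernel contains a hyperplane
lemma aux_rank_le_one {k : Type*} [Field k] {m : ℕ} (M : Matrix (Fin m) (Fin m) k)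
    (hrk : M.rank ≤ 1) :
    ∃ w : Fin m → k, ∀ v : Fin m → k, ∑ j, w j * v j = 0 → M.mulVec v = 0 := by
  have hpr : (LinearMap.range M.mulVecLin).IsPrincipal :=
    (Submodule.finrank_le_one_iff_isPrincipal _).mp hrk
  obtain ⟨⟨u, hu⟩⟩ := hpr
  have hcol : ∀ j, ∃ c : k, c • u = M.mulVec (Pi.single j 1) := by
    intro j
    rw [← Submodule.mem_span_singleton, ← hu]
    exact ⟨Pi.single j 1, rfl⟩
  choose w hw using hcol
  refine ⟨w, fun v hv => ?_⟩
  have hMij : ∀ i j, M i j = w j * u i := by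
    intro i j
    have := congrFun (hw j) i
    rw [Matrix.mulVec_single] at this
    simpa [mul_comm] using this.symm
  funext i
  simp only [Matrix.mulVec, dotProduct, Pi.zero_apply]
  calc ∑ j, M i j * v j = ∑ j, u i * (w j * v j) := by
        refine Finset.sum_congr rfl fun j _ => ?_
        rw [hMij i j]; ring
    _ = u i * ∑ j, w j * v j := by rw [Finset.mul_sum]
    _ = 0 := by rw [hv, mul_zero]

/-- If `Y = V₊(I) ⊆ ℙⁿ(k)` has dimension ≥ 1 (i.e. `Krull dim A/I ≥ 2`) and
`h ∈ GL_{n+1}(k)` satisfies `rank(h − 1) ≤ 1`, then `Y ∩ hY ≠ ∅`. -/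
theorem stmt_6 {k : Type*} [Field k] [IsAlgClosed k] (n : ℕ) (hn : 1 ≤ n)
    (I : Ideal (MvPolynomial (Fin (n + 1)) k))
    (hrad : I.IsRadical)
    (hhom : ∀ f ∈ I, ∀ m : ℕ, MvPolynomial.homogeneousComponent m f ∈ I)
    (hdim : 2 ≤ ringKrullDim (MvPolynomial (Fin (n + 1)) k ⧸ I))
    (h : Matrix.GeneralLinearGroup (Fin (n + 1)) k)
    (hrk : ((h : Matrix (Fin (n + 1)) (Fin (n + 1)) k) - 1).rank ≤ 1) :
    ∃ v : Fin (n + 1) → k, v ≠ 0 ∧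
      (∀ f ∈ I, MvPolynomial.eval v f = 0) ∧
      (∀ f ∈ I, MvPolynomial.eval
        (((h⁻¹ : Matrix.GeneralLinearGroup (Fin (n + 1)) k) :
          Matrix (Fin (n + 1)) (Fin (n + 1)) k).mulVec v) f = 0) := by
  obtain ⟨w, hw⟩ := aux_rank_le_one _ hrk
  obtain ⟨v, hv0, hvI, hvw⟩ := aux_exists_zero_on_hyperplane n I hhom hdim w
  have hfix : (h : Matrix (Fin (n+1)) (Fin (n+1)) k).mulVec v = v := by
    have := hw v hvw
    rwa [Matrix.sub_mulVec, Matrix.one_mulVec, sub_eq_zero] at this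
  have hinv : ((h⁻¹ : Matrix.GeneralLinearGroup (Fin (n + 1)) k) :
      Matrix (Fin (n + 1)) (Fin (n + 1)) k).mulVec v = v := by
    conv_lhs => rw [← hfix]
    rw [Matrix.mulVec_mulVec]
    have hone : ((h⁻¹ : Matrix.GeneralLinearGroup (Fin (n + 1)) k) :
        Matrix (Fin (n + 1)) (Fin (n + 1)) k) * (h : Matrix (Fin (n+1)) (Fin (n+1)) k)
        = 1 := by
      rw [← Matrix.GeneralLinearGroup.coe_mul, inv_mul_cancel,
        Matrix.GeneralLinearGroup.coe_one]
    rw [hone, Matrix.one_mulVec]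
  exact ⟨v, hv0, hvI, fun f hf => by rw [hinv]; exact hvI f hf⟩
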